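/- Let n ≥ 3, let P = { p ∈ ℝⁿ : p₁ ≥ p₂ ≥ … ≥ pₙ ≥ 0 and Σₖ pₖ = 1 }, and define the majorization order p ≼ₘ q iff Σₖ₌₁,…,ᵢ pₖ ≤ Σₖ₌₁,…,ᵢ qₖ for all i = 1,…,n−1. Then (P,≼ₘ) has no finite strict monotone multi-utility: for every natural number N and every family (vⱼ)ⱼ₌₁,…,N of strict monotones for ≼ₘ, it is not the case that for all p, q ∈ P one has p ≼ₘ q iff vⱼ(p) ≤ vⱼ(q) for all j = 1,…,N. -/
import Mathlib


/-- A binary relation is a partial order: reflexive, antisymmetric, transitive. -/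
def IsPartialOrderRel {X : Type*} (r : X → X → Prop) : Prop :=
  (∀ x, r x x) ∧ (∀ x y, r x y → r y x → x = y) ∧ (∀ x y z, r x y → r y z → r x z)

/-- `r'` extends `r`. -/
def RelExtends {X : Type*} (r r' : X → X → Prop) : Prop :=
  ∀ x y, r x y → r' x y

/-- `r` is total: any two elements are comparable. -/
def TotalRel {X : Type*} (r : X → X → Prop) : Prop :=
  ∀ x y, r x y ∨ r y x

/-- `r'` is a linear extension of `r`: a total partial order extending `r`. -/
def IsLinearExtension {X : Type*} (r r' : X → X → Prop) : Prop :=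
  IsPartialOrderRel r' ∧ TotalRel r' ∧ RelExtends r r'

/-- `x` and `y` are incomparable with respect to `r`. -/
def Incomp {X : Type*} (r : X → X → Prop) (x y : X) : Prop :=
  ¬ r x y ∧ ¬ r y x

/-- `D` is Debreu dense for `r`. -/
def DebreuDense {X : Type*} (r : X → X → Prop) (D : Set X) : Prop :=
  ∀ x y, r x y → ¬ r y x → ∃ d ∈ D, r x d ∧ r d y

/-- `(X, r)` is Debreu separable: it has a countable Debreu dense subset. -/
def DebreuSeparable {X : Type*} (r : X → X → Prop) : Prop :=
  ∃ D : Set X, D.Countable ∧ DebreuDense r D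

/-- The limit of a sequence of binary relations. -/
def LimitRel {X : Type*} (r : ℕ → X → X → Prop) : X → X → Prop :=
  fun x y => ∃ n₀ : ℕ, ∀ n, n₀ ≤ n → r n x y

/-- The set of non-increasingly ordered probability vectors of length `n`. -/
def ProbVec (n : ℕ) : Type :=
  {p : Fin n → ℝ // (∀ i j : Fin n, i ≤ j → p j ≤ p i) ∧ (∀ i, 0 ≤ p i) ∧ ∑ k, p k = 1}

/-- The `i`-th partial sum of a vector `p : Fin n → ℝ`. -/
def partialSum {n : ℕ} (p : Fin n → ℝ) (i : ℕ) : ℝ :=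
  ∑ k ∈ Finset.univ.filter (fun k : Fin n => (k : ℕ) < i), p k

/-- The majorization order on `ProbVec n`. -/
def Maj {n : ℕ} (p q : ProbVec n) : Prop :=
  ∀ i : ℕ, 1 ≤ i → i ≤ n - 1 → partialSum p.1 i ≤ partialSum q.1 i

/-- value function on naturals -/
noncomputable def g3 (a b : ℝ) (m : ℕ) : ℝ :=
  if m = 0 then a else if m = 1 then b - a else if m = 2 then 1 - b else 0

lemma g3_anti (a b : ℝ) (h1 : b - a ≤ a) (h2 : 1 - b ≤ b - a) (h3 : 0 ≤ 1 - b) :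
    ∀ m m' : ℕ, m ≤ m' → g3 a b m' ≤ g3 a b m := by
  intro m m' h
  unfold g3
  rcases m with _|_|_|m <;> rcases m' with _|_|_|m' <;> simp_all <;> first | linarith | omega

noncomputable def vec3 (n : ℕ) (a b : ℝ) : Fin n → ℝ := fun i => g3 a b (i : ℕ)


lemma g3_nonneg (a b : ℝ) (h1 : b - a ≤ a) (h2 : 1 - b ≤ b - a) (h3 : 0 ≤ 1 - b) (m : ℕ) :
    0 ≤ g3 a b m := by
  rcases m with _|_|_|m <;> simp [g3] <;> linarith

lemma g3_zero (a b : ℝ) (m : ℕ) (hm : 3 ≤ m) : g3 a b m = 0 := by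
  rcases m with _|_|_|m <;> simp [g3] <;> omega

lemma vec3_mem (n : ℕ) (hn : 3 ≤ n) (a b : ℝ) (h1 : b - a ≤ a) (h2 : 1 - b ≤ b - a)
    (h3 : 0 ≤ 1 - b) :
    (∀ i j : Fin n, i ≤ j → vec3 n a b j ≤ vec3 n a b i) ∧ (∀ i, 0 ≤ vec3 n a b i) ∧
      ∑ k, vec3 n a b k = 1 := by
  refine ⟨fun i j hij => g3_anti a b h1 h2 h3 i j hij,
    fun i => g3_nonneg a b h1 h2 h3 i, ?_⟩
  have step1 : ∑ k : Fin n, vec3 n a b k = ∑ m ∈ Finset.range n, g3 a b m := by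
    rw [← Fin.sum_univ_eq_sum_range]; rfl
  have hsub : Finset.range 3 ⊆ Finset.range n := Finset.range_subset_range.2 hn
  have step2 : ∑ m ∈ Finset.range 3, g3 a b m = ∑ m ∈ Finset.range n, g3 a b m := by
    apply Finset.sum_subset hsub
    intro x hx hx3
    simp only [Finset.mem_range] at hx hx3
    exact g3_zero a b x (by omega)
  rw [step1, ← step2]
  simp [Finset.sum_range_succ, g3]

lemma partialSum_vec3 (n : ℕ) (hn : 3 ≤ n) (a b : ℝ) (i : ℕ) :
    partialSum (vec3 n a b) i =
      if i = 0 then 0 else if i = 1 then a else if i = 2 then b else 1 := by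
  have key : partialSum (vec3 n a b) i
      = ∑ m ∈ Finset.range n, (if m < i then g3 a b m else 0) := by
    rw [partialSum, Finset.sum_filter, ← Fin.sum_univ_eq_sum_range]
    rfl
  have hsub : Finset.range 3 ⊆ Finset.range n := Finset.range_subset_range.2 hn
  have step2 : ∑ m ∈ Finset.range 3, (if m < i then g3 a b m else 0)
      = ∑ m ∈ Finset.range n, (if m < i then g3 a b m else 0) := by
    apply Finset.sum_subset hsub
    intro x hx hx3
    simp only [Finset.mem_range] at hx hx3
    rw [g3_zero a b x (by omega)]
    simp
  rw [key, ← step2]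
  simp only [Finset.sum_range_succ, Finset.sum_range_zero, g3]
  rcases i with _|_|_|i <;> simp <;> first | ring | (rw [if_neg (by omega)]; omega)

lemma Maj_vec3 (n : ℕ) (hn : 3 ≤ n) (a b a' b' : ℝ) (ha : a ≤ a') (hb : b ≤ b')
    (p q : ProbVec n) (hp : p.1 = vec3 n a b) (hq : q.1 = vec3 n a' b') : Maj p q := by
  intro i hi1 hi2
  rw [hp, hq, partialSum_vec3 n hn, partialSum_vec3 n hn]
  split_ifs <;> first | exact ha | exact hb | norm_num | linarith | omega

theorem main_thm (n : ℕ) (hn : 3 ≤ n) :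
    ∀ (N : ℕ) (v : Fin N → ProbVec n → ℝ),
      (∀ j, (∀ p q, Maj p q → v j p ≤ v j q) ∧
            (∀ p q, Maj p q → ¬ Maj q p → v j p < v j q)) →
      ¬ (∀ p q, Maj p q ↔ ∀ j, v j p ≤ v j q) := by
  intro N v hv hmu
  set T := Set.Ioo (0 : ℝ) (1/100) with hT
  have hbound : ∀ t : T, 0 < t.1 ∧ t.1 < 1/100 := fun t => t.2
  have memP : ∀ t : T, (∀ i j : Fin n, i ≤ j → vec3 n (1/2 + t.1) (4/5) j ≤ vec3 n (1/2 + t.1) (4/5) i) ∧ (∀ i, 0 ≤ vec3 n (1/2 + t.1) (4/5) i) ∧ ∑ k, vec3 n (1/2 + t.1) (4/5) k = 1 := by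
    intro t
    obtain ⟨h1, h2⟩ := hbound t
    exact vec3_mem n hn _ _ (by linarith) (by linarith) (by norm_num)
  have memQ : ∀ t : T, (∀ i j : Fin n, i ≤ j → vec3 n (1/2 + t.1) (81/100) j ≤ vec3 n (1/2 + t.1) (81/100) i) ∧ (∀ i, 0 ≤ vec3 n (1/2 + t.1) (81/100) i) ∧ ∑ k, vec3 n (1/2 + t.1) (81/100) k = 1 := by
    intro t
    obtain ⟨h1, h2⟩ := hbound t
    exact vec3_mem n hn _ _ (by linarith) (by linarith) (by norm_num)
  set P : T → ProbVec n := fun t => ⟨vec3 n (1/2 + t.1) (4/5), memP t⟩ with hP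
  set Q : T → ProbVec n := fun t => ⟨vec3 n (1/2 + t.1) (81/100), memQ t⟩ with hQ
  have hPQ : ∀ t : T, Maj (P t) (Q t) := fun t =>
    Maj_vec3 n hn _ _ _ _ le_rfl (by norm_num) _ _ rfl rfl
  have hstrict : ∀ t : T, ¬ Maj (Q t) (P t) := by
    intro t h
    have h2 := h 2 (by norm_num) (by omega)
    rw [hP, hQ] at h2
    simp only [partialSum_vec3 n hn] at h2
    norm_num at h2
  have hlt : ∀ (t : T) (j : Fin N), v j (P t) < v j (Q t) :=
    fun t j => (hv j).2 _ _ (hPQ t) (hstrict t)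
  have hcross : ∀ t s : T, t.1 < s.1 → ¬ Maj (P s) (Q t) := by
    intro t s hts h
    have h1 := h 1 le_rfl (by omega)
    rw [hP, hQ] at h1
    simp only [partialSum_vec3 n hn] at h1
    norm_num at h1
    exact absurd h1 (not_le.2 hts)
  -- pick rational points in the boxes
  have hratex : ∀ (t : T) (j : Fin N), ∃ r : ℚ, v j (P t) < (r : ℝ) ∧ (r : ℝ) < v j (Q t) :=
    fun t j => exists_rat_btwn (hlt t j)
  choose f hf1 hf2 using hratex
  have hinj : Function.Injective f := by
    intro t s hfts
    by_contra hne
    have hne' : t.1 ≠ s.1 := fun h => hne (Subtype.ext h)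
    rcases lt_or_gt_of_ne hne' with hlt' | hlt'
    · -- t < s : ¬ Maj (P s) (Q t)
      have := hcross t s hlt'
      rw [hmu] at this
      push_neg at this
      obtain ⟨j, hj⟩ := this
      have a1 := hf1 s j
      have a2 := hf2 t j
      rw [hfts] at a2
      linarith
    · have := hcross s t hlt'
      rw [hmu] at this
      push_neg at this
      obtain ⟨j, hj⟩ := this
      have a1 := hf1 t j
      have a2 := hf2 s j
      rw [hfts] at a1
      linarith
  have hcount : Countable T := hinj.countable
  have hTcount : (Set.Ioo (0 : ℝ) (1/100)).Countable := Set.countable_coe_iff.mp hcount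
  have hmk := Cardinal.mk_le_aleph0_iff.2 hTcount.to_subtype
  rw [Cardinal.mk_Ioo_real (by norm_num : (0:ℝ) < 1/100)] at hmk
  exact absurd hmk Cardinal.aleph0_lt_continuum.not_ge

theorem majorization_no_finite_strictMonotoneMultiUtility (n : ℕ) (hn : 3 ≤ n) :
    ∀ (N : ℕ) (v : Fin N → ProbVec n → ℝ),
      (∀ j, (∀ p q, Maj p q → v j p ≤ v j q) ∧
            (∀ p q, Maj p q → ¬ Maj q p → v j p < v j q)) →
      ¬ (∀ p q, Maj p q ↔ ∀ j, v j p ≤ v j q) := by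
  exact main_thm n hn
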